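/- Let f = (f11, f12, f22) ∈ C²_c(S²; D1). If L⁰ f (= Lf), L¹ f, and Mf all vanish identically on ℝ², then f11 ≡ f12 ≡ f22 ≡ 0. (A symmetric 2-tensor field is uniquely determined by its longitudinal V-line transform, the first moment longitudinal V-line transform, and its mixed V-line transform.) -/

import Mathlib

noncomputable section

open MeasureTheory

/-- The divergent beam transform `X_w h (x) = ∫₀^∞ h(x + t w) dt`. -/
def Xbeam (w : ℝ × ℝ) (h : ℝ × ℝ → ℝ) (x : ℝ × ℝ) : ℝ :=
  ∫ t in Set.Ioi (0 : ℝ), h (x + t • w)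

/-- The k-th moment divergent beam transform `X_w^k h (x) = ∫₀^∞ t^k h(x + t w) dt`. -/
def Xmom (k : ℕ) (w : ℝ × ℝ) (h : ℝ × ℝ → ℝ) (x : ℝ × ℝ) : ℝ :=
  ∫ t in Set.Ioi (0 : ℝ), t ^ k * h (x + t • w)

/-- The directional derivative `D_w h = w ⋅ ∇h`. -/
def Dir (w : ℝ × ℝ) (h : ℝ × ℝ → ℝ) (x : ℝ × ℝ) : ℝ :=
  fderiv ℝ h x w

/-- Support contained in the open unit disc `D1`. -/
def SuppInDisc (h : ℝ × ℝ → ℝ) : Prop :=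
  ∀ x : ℝ × ℝ, 1 ≤ x.1 ^ 2 + x.2 ^ 2 → h x = 0

/-- The longitudinal V-line transform. -/
def VlineL (u1 u2 : ℝ) (f11 f12 f22 : ℝ × ℝ → ℝ) : ℝ × ℝ → ℝ :=
  Xbeam (u1, u2) (fun y => u1 ^ 2 * f11 y + 2 * u1 * u2 * f12 y + u2 ^ 2 * f22 y)
    + Xbeam (-u1, u2) (fun y => u1 ^ 2 * f11 y - 2 * u1 * u2 * f12 y + u2 ^ 2 * f22 y)

/-- The transverse V-line transform. -/
def VlineT (u1 u2 : ℝ) (f11 f12 f22 : ℝ × ℝ → ℝ) : ℝ × ℝ → ℝ :=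
  Xbeam (u1, u2) (fun y => u2 ^ 2 * f11 y - 2 * u1 * u2 * f12 y + u1 ^ 2 * f22 y)
    + Xbeam (-u1, u2) (fun y => u2 ^ 2 * f11 y + 2 * u1 * u2 * f12 y + u1 ^ 2 * f22 y)

/-- The mixed V-line transform. -/
def VlineM (u1 u2 : ℝ) (f11 f12 f22 : ℝ × ℝ → ℝ) : ℝ × ℝ → ℝ :=
  Xbeam (u1, u2) (fun y => -(u1 * u2) * f11 y + (u1 ^ 2 - u2 ^ 2) * f12 y + u1 * u2 * f22 y)
    + Xbeam (-u1, u2) (fun y => u1 * u2 * f11 y + (u1 ^ 2 - u2 ^ 2) * f12 y - u1 * u2 * f22 y)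

/-- The k-th moment longitudinal V-line transform. -/
def VlineLk (k : ℕ) (u1 u2 : ℝ) (f11 f12 f22 : ℝ × ℝ → ℝ) : ℝ × ℝ → ℝ :=
  Xmom k (u1, u2) (fun y => u1 ^ 2 * f11 y + 2 * u1 * u2 * f12 y + u2 ^ 2 * f22 y)
    + Xmom k (-u1, u2) (fun y => u1 ^ 2 * f11 y - 2 * u1 * u2 * f12 y + u2 ^ 2 * f22 y)

/-- The k-th moment transverse V-line transform. -/
def VlineTk (k : ℕ) (u1 u2 : ℝ) (f11 f12 f22 : ℝ × ℝ → ℝ) : ℝ × ℝ → ℝ :=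
  Xmom k (u1, u2) (fun y => u2 ^ 2 * f11 y - 2 * u1 * u2 * f12 y + u1 ^ 2 * f22 y)
    + Xmom k (-u1, u2) (fun y => u2 ^ 2 * f11 y + 2 * u1 * u2 * f12 y + u1 ^ 2 * f22 y)

/-- The k-th moment mixed V-line transform. -/
def VlineMk (k : ℕ) (u1 u2 : ℝ) (f11 f12 f22 : ℝ × ℝ → ℝ) : ℝ × ℝ → ℝ :=
  Xmom k (u1, u2) (fun y => -(u1 * u2) * f11 y + (u1 ^ 2 - u2 ^ 2) * f12 y + u1 * u2 * f22 y)
    + Xmom k (-u1, u2) (fun y => u1 * u2 * f11 y + (u1 ^ 2 - u2 ^ 2) * f12 y - u1 * u2 * f22 y)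


namespace VP

open MeasureTheory Set

def emap (u1 u2 : ℝ) (z : ℝ × ℝ) : ℝ × ℝ := (u1 * (z.1 - z.2), u2 * (z.1 + z.2))

lemma integrableOn_Ioi_of_vanish {f : ℝ → ℝ} (hf : Continuous f) {C : ℝ} (hC : 0 ≤ C)
    (h0 : ∀ s, C ≤ s → f s = 0) : IntegrableOn f (Ioi (0:ℝ)) := by
  rw [← Set.Ioc_union_Ioi_eq_Ioi hC]
  refine (hf.integrableOn_Ioc).union ?_
  exact (integrableOn_zero).congr_fun (fun s hs => (h0 s (le_of_lt hs)).symm) measurableSet_Ioi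

lemma integral_Ioi_eq_intervalIntegral {f : ℝ → ℝ} (hf : Continuous f) {C : ℝ} (hC : 0 ≤ C)
    (h0 : ∀ s, C ≤ s → f s = 0) :
    ∫ s in Ioi (0:ℝ), f s = ∫ s in (0:ℝ)..C, f s := by
  rw [intervalIntegral.integral_of_le hC, ← Set.Ioc_union_Ioi_eq_Ioi hC,
    setIntegral_union (Set.Ioc_disjoint_Ioi le_rfl) measurableSet_Ioi hf.integrableOn_Ioc
      ((integrableOn_zero).congr_fun (fun s hs => (h0 s (le_of_lt hs)).symm) measurableSet_Ioi)]
  have h2 : ∫ s in Ioi C, f s = 0 := by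
    rw [setIntegral_congr_fun measurableSet_Ioi (fun s hs => h0 s (le_of_lt hs))]
    simp
  rw [h2, add_zero]

lemma integral_Ioi_deriv {g g' : ℝ → ℝ} (hg : ∀ t, HasDerivAt g (g' t) t)
    (hg' : Continuous g') {C : ℝ} (hC : 0 ≤ C)
    (hvg' : ∀ s, C ≤ s → g' s = 0) (hvg : ∀ s, C ≤ s → g s = 0) :
    ∫ s in Ioi (0:ℝ), g' s = - g 0 := by
  rw [integral_Ioi_eq_intervalIntegral hg' hC hvg',
    intervalIntegral.integral_eq_sub_of_hasDerivAt (fun x _ => hg x)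
      (hg'.intervalIntegrable _ _), hvg C le_rfl]
  ring

lemma integral_Ioi_mul_deriv {g g' : ℝ → ℝ} (hg : ∀ t, HasDerivAt g (g' t) t)
    (hgc : Continuous g) (hg' : Continuous g') {C : ℝ} (hC : 0 ≤ C)
    (hvg : ∀ s, C ≤ s → g s = 0) (hvg' : ∀ s, C ≤ s → g' s = 0) :
    ∫ s in Ioi (0:ℝ), s * g' s = - ∫ s in Ioi (0:ℝ), g s := by
  have hG : ∀ t, HasDerivAt (fun s => s * g s) (g t + t * g' t) t := by
    intro t
    have := (hasDerivAt_id t).fun_mul (hg t)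
    simpa [add_comm] using this
  have h := integral_Ioi_deriv hG (hgc.add (continuous_id.mul hg')) hC
      (fun s hs => by simp [hvg s hs, hvg' s hs]) (fun s hs => by simp [hvg s hs])
  have hsplit : ∫ s in Ioi (0:ℝ), (g s + s * g' s) =
      (∫ s in Ioi (0:ℝ), g s) + ∫ s in Ioi (0:ℝ), s * g' s := by
    exact integral_add (integrableOn_Ioi_of_vanish hgc hC hvg)
      (integrableOn_Ioi_of_vanish (continuous_id.mul hg') hC (fun s hs => by simp [hvg' s hs]))
  rw [hsplit] at h
  simp at h
  linarith

lemma hasDerivAt_integral_param (k k' : ℝ → ℝ → ℝ)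
    (hk : Continuous fun z : ℝ × ℝ => k z.1 z.2)
    (hk' : Continuous fun z : ℝ × ℝ => k' z.1 z.2)
    (hd : ∀ x t, HasDerivAt (fun y => k y t) (k' x t) x)
    {C : ℝ} (hC : 0 ≤ C) (x₀ : ℝ)
    (hvan : ∀ x ∈ Metric.ball x₀ 1, ∀ t, C ≤ t → k x t = 0)
    (hvan' : ∀ x ∈ Metric.ball x₀ 1, ∀ t, C ≤ t → k' x t = 0) :
    HasDerivAt (fun x => ∫ t in Ioi (0:ℝ), k x t) (∫ t in Ioi (0:ℝ), k' x₀ t) x₀ := by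
  obtain ⟨M, hM⟩ := ((isCompact_Icc (a := x₀ - 1) (b := x₀ + 1)).prod
    (isCompact_Icc (a := (0:ℝ)) (b := C))).exists_bound_of_continuousOn hk'.continuousOn
  set bound : ℝ → ℝ := (Set.Ioc (0:ℝ) C).indicator (fun _ => max M 0) with hbound
  have hmeas : ∀ᶠ x in nhds x₀, AEStronglyMeasurable (fun t => k x t)
      (volume.restrict (Ioi (0:ℝ))) := by
    filter_upwards with x
    exact ((hk.comp (continuous_const.prodMk continuous_id)).aestronglyMeasurable)
  have hint : Integrable (fun t => k x₀ t) (volume.restrict (Ioi (0:ℝ))) :=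
    integrableOn_Ioi_of_vanish (hk.comp (continuous_const.prodMk continuous_id)) hC
      (hvan x₀ (Metric.mem_ball_self one_pos))
  have hmeas' : AEStronglyMeasurable (fun t => k' x₀ t) (volume.restrict (Ioi (0:ℝ))) :=
    (hk'.comp (continuous_const.prodMk continuous_id)).aestronglyMeasurable
  have hbnd : ∀ᵐ t ∂(volume.restrict (Ioi (0:ℝ))), ∀ x ∈ Metric.ball x₀ 1,
      ‖k' x t‖ ≤ bound t := by
    filter_upwards [ae_restrict_mem measurableSet_Ioi] with t ht x hx
    by_cases htC : t ≤ C
    · have hb : bound t = max M 0 := by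
        rw [hbound, Set.indicator_of_mem (by exact ⟨ht, htC⟩)]
      rw [hb]
      have hxI : x ∈ Icc (x₀ - 1) (x₀ + 1) := by
        have := Metric.mem_ball.1 hx
        rw [Real.dist_eq] at this
        constructor <;> [linarith [abs_lt.1 this |>.1, abs_lt.1 this |>.2];
          linarith [abs_lt.1 this |>.2]]
      exact le_trans (hM (x, t) ⟨hxI, ⟨le_of_lt ht, htC⟩⟩) (le_max_left _ _)
    · have hb : bound t = 0 := by
        rw [hbound, Set.indicator_of_notMem (by simp [htC])]
      rw [hvan' x hx t (le_of_not_ge htC), hb]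
      simp
  have hbint : Integrable bound (volume.restrict (Ioi (0:ℝ))) := by
    rw [hbound, integrable_indicator_iff measurableSet_Ioc]
    refine (integrableOn_const_iff (by finiteness)).2 (Or.inr ?_)
    exact lt_of_le_of_lt (Measure.restrict_apply_le _ _) measure_Ioc_lt_top
  have hdiff : ∀ᵐ t ∂(volume.restrict (Ioi (0:ℝ))), ∀ x ∈ Metric.ball x₀ 1,
      HasDerivAt (fun y => k y t) (k' x t) x := by
    filter_upwards with t x _
    exact hd x t
  exact (hasDerivAt_integral_of_dominated_loc_of_deriv_le (Metric.ball_mem_nhds x₀ zero_lt_one) hmeas hint hmeas'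
    hbnd hbint hdiff).2

lemma fderiv_zero_of_zero_on_open {F : ℝ × ℝ → ℝ} {U : Set (ℝ × ℝ)} (hU : IsOpen U)
    (h0 : ∀ z ∈ U, F z = 0) {z : ℝ × ℝ} (hz : z ∈ U) : fderiv ℝ F z = 0 := by
  have h : F =ᶠ[nhds z] (fun _ => (0:ℝ)) := Filter.eventually_of_mem (hU.mem_nhds hz) h0
  rw [h.fderiv_eq]
  simp

lemma hasDerivAt_line (F : ℝ × ℝ → ℝ) (hF : Differentiable ℝ F) (z w : ℝ × ℝ) (t : ℝ) :
    HasDerivAt (fun s : ℝ => F (z + s • w)) (fderiv ℝ F (z + t • w) w) t := by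
  have h1 : HasDerivAt (fun s : ℝ => z + s • w) w t := by
    simpa using ((hasDerivAt_id t).smul_const w).const_add z
  exact ((hF _).hasFDerivAt).comp_hasDerivAt t h1

lemma hasDerivAt_pt (F : ℝ × ℝ → ℝ) (hF : Differentiable ℝ F) (φ : ℝ → ℝ × ℝ)
    (a b : ℝ × ℝ) (x : ℝ) (hφ : ∀ y, a + y • b = φ y) :
    HasDerivAt (fun y => F (φ y)) (fderiv ℝ F (φ x) b) x := by
  have h := hasDerivAt_line F hF a b x
  simp only [hφ] at h
  exact h

lemma cont_pd {F : ℝ × ℝ → ℝ} {n : WithTop ℕ∞} (hF : ContDiff ℝ n F) (hn : 1 ≤ n) (v : ℝ × ℝ) :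
    Continuous fun z => fderiv ℝ F z v :=
  (hF.continuous_fderiv (zero_lt_one.trans_le hn).ne').clm_apply continuous_const

lemma contDiff_pd {F : ℝ × ℝ → ℝ} (hF : ContDiff ℝ 2 F) (v : ℝ × ℝ) :
    ContDiff ℝ 1 fun z => fderiv ℝ F z v :=
  (ContinuousLinearMap.apply ℝ ℝ v).contDiff.comp (hF.fderiv_right (by norm_num))

lemma pd_zero_fst {F : ℝ × ℝ → ℝ} {B : ℝ} (hbox : ∀ z : ℝ × ℝ, B ≤ z.1 → F z = 0)
    {z : ℝ × ℝ} (hz : B < z.1) : fderiv ℝ F z = 0 :=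
  fderiv_zero_of_zero_on_open (isOpen_lt continuous_const continuous_fst)
    (fun w hw => hbox w (le_of_lt hw)) hz

lemma pd_zero_snd {F : ℝ × ℝ → ℝ} {B : ℝ} (hbox : ∀ z : ℝ × ℝ, B ≤ z.2 → F z = 0)
    {z : ℝ × ℝ} (hz : B < z.2) : fderiv ℝ F z = 0 :=
  fderiv_zero_of_zero_on_open (isOpen_lt continuous_const continuous_snd)
    (fun w hw => hbox w (le_of_lt hw)) hz

lemma lemA1 {F : ℝ × ℝ → ℝ} (hF : ContDiff ℝ 1 F) {B : ℝ} (hB : 0 < B)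
    (hbox : ∀ z : ℝ × ℝ, B ≤ z.1 → F z = 0) (p q : ℝ) :
    ∫ t in Ioi (0:ℝ), fderiv ℝ F (p + t, q) ((1:ℝ), (0:ℝ)) = - F (p, q) := by
  have hdiff : Differentiable ℝ F := hF.differentiable one_ne_zero
  have hC : (0:ℝ) ≤ B + |p| + 1 := by positivity
  have hg : ∀ t, HasDerivAt (fun t => F (p + t, q))
      (fderiv ℝ F (p + t, q) ((1:ℝ), (0:ℝ))) t := by
    intro t
    exact hasDerivAt_pt F hdiff (fun y => (p + y, q)) (p, q) (1, 0) t
      (fun y => by simp [Prod.ext_iff])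
  have hcont : Continuous fun t => fderiv ℝ F (p + t, q) ((1:ℝ), (0:ℝ)) :=
    (cont_pd hF le_rfl _).comp (by fun_prop)
  have h := integral_Ioi_deriv hg hcont hC
    (fun s hs => by
      have : B < p + s := by cases abs_cases p <;> linarith
      rw [pd_zero_fst hbox (by simpa using this)]; rfl)
    (fun s hs => hbox _ (by simp; cases abs_cases p <;> linarith))
  simpa using h

lemma lemA2 {F : ℝ × ℝ → ℝ} (hF : ContDiff ℝ 1 F) {B : ℝ} (hB : 0 < B)
    (hbox : ∀ z : ℝ × ℝ, B ≤ z.2 → F z = 0) (p q : ℝ) :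
    ∫ t in Ioi (0:ℝ), fderiv ℝ F (p, q + t) ((0:ℝ), (1:ℝ)) = - F (p, q) := by
  have hdiff : Differentiable ℝ F := hF.differentiable one_ne_zero
  have hC : (0:ℝ) ≤ B + |q| + 1 := by positivity
  have hg : ∀ t, HasDerivAt (fun t => F (p, q + t))
      (fderiv ℝ F (p, q + t) ((0:ℝ), (1:ℝ))) t := by
    intro t
    exact hasDerivAt_pt F hdiff (fun y => (p, q + y)) (p, q) (0, 1) t
      (fun y => by simp [Prod.ext_iff])
  have hcont : Continuous fun t => fderiv ℝ F (p, q + t) ((0:ℝ), (1:ℝ)) :=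
    (cont_pd hF le_rfl _).comp (by fun_prop)
  have h := integral_Ioi_deriv hg hcont hC
    (fun s hs => by
      have : B < q + s := by cases abs_cases q <;> linarith
      rw [pd_zero_snd hbox (by simpa using this)]; rfl)
    (fun s hs => hbox _ (by simp; cases abs_cases q <;> linarith))
  simpa using h

lemma deriv_zero_of_zero_fun {f : ℝ → ℝ} {d x : ℝ} (hf : ∀ y, f y = 0)
    (hd : HasDerivAt f d x) : d = 0 := by
  have hfz : f = fun _ => (0:ℝ) := funext hf
  rw [hfz] at hd
  exact hd.unique (hasDerivAt_const x 0)
lemma key {H : ℝ × ℝ → ℝ} (hH : ContDiff ℝ 2 H) {B : ℝ} (hB : 0 < B)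
    (hbox : ∀ z : ℝ × ℝ, B ≤ z.1 ∨ B ≤ z.2 → H z = 0)
    (hdag : ∀ p q : ℝ, ∫ t in Ioi (0:ℝ), fderiv ℝ H (p + t, q) ((0:ℝ), (1:ℝ)) = - H (p, q)) :
    ∀ z : ℝ × ℝ, H z = 0 := by
  have hH1 : ContDiff ℝ 1 H := hH.of_le one_le_two
  have hdiff : Differentiable ℝ H := hH1.differentiable one_ne_zero
  have hboxf : ∀ z : ℝ × ℝ, B ≤ z.1 → H z = 0 := fun z h => hbox z (Or.inl h)
  have hcontH : Continuous H := hH.continuous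
  -- the function x ↦ ∫ H (x + s, q) ds, derivative in x
  have hder : ∀ (q x0 : ℝ), HasDerivAt (fun x => ∫ s in Ioi (0:ℝ), H (x + s, q))
      (∫ s in Ioi (0:ℝ), fderiv ℝ H (x0 + s, q) ((1:ℝ), (0:ℝ))) x0 := by
    intro q x0
    refine hasDerivAt_integral_param (fun x s => H (x + s, q))
      (fun x s => fderiv ℝ H (x + s, q) ((1:ℝ), (0:ℝ))) (hcontH.comp (by fun_prop))
      ((cont_pd hH one_le_two ((1:ℝ), (0:ℝ))).comp (by fun_prop)) ?_ (C := B + |x0| + 2)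
      (by positivity) x0 ?_ ?_
    · intro x s
      exact hasDerivAt_pt H hdiff (fun y => (y + s, q)) (s, q) (1, 0) x
        (fun y => by simp only [Prod.mk_add_mk, Prod.smul_mk, smul_eq_mul, Prod.mk.injEq]
                     constructor <;> ring)
    · intro x hx s hs
      have hd := Metric.mem_ball.1 hx
      rw [Real.dist_eq] at hd
      have h1 := abs_lt.1 hd
      have hle : B ≤ x + s := by cases abs_cases x0 <;> linarith [h1.1, h1.2]
      exact hboxf (x + s, q) hle
    · intro x hx s hs
      have hd := Metric.mem_ball.1 hx
      rw [Real.dist_eq] at hd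
      have h1 := abs_lt.1 hd
      have hlt : B < x + s := by cases abs_cases x0 <;> linarith [h1.1, h1.2]
      show (fderiv ℝ H (x + s, q)) ((1:ℝ), (0:ℝ)) = 0
      rw [pd_zero_fst hboxf (z := (x + s, q)) hlt]; rfl
  -- Φ vanishes
  have hPhi0 : ∀ p q : ℝ, ∫ s in Ioi (0:ℝ), H (p + s, q) = 0 := by
    intro p q
    set c := p + q with hc
    set ζ : ℝ → ℝ := fun x => ∫ s in Ioi (0:ℝ), H (x + s, c - x) with hζdef
    have hζ : ∀ x0 : ℝ, HasDerivAt ζ 0 x0 := by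
      intro x0
      have hstep : HasDerivAt ζ
          (∫ s in Ioi (0:ℝ), fderiv ℝ H (x0 + s, c - x0) ((1:ℝ), (-1:ℝ))) x0 := by
        refine hasDerivAt_integral_param (fun x s => H (x + s, c - x))
          (fun x s => fderiv ℝ H (x + s, c - x) ((1:ℝ), (-1:ℝ)))
          (hcontH.comp (by fun_prop))
          ((cont_pd hH one_le_two ((1:ℝ), (-1:ℝ))).comp (by fun_prop)) ?_
          (C := B + |x0| + 2) (by positivity) x0 ?_ ?_
        · intro x s
          exact hasDerivAt_pt H hdiff (fun y => (y + s, c - y)) (s, c) (1, -1) x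
            (fun y => by simp only [Prod.mk_add_mk, Prod.smul_mk, smul_eq_mul, Prod.mk.injEq]
                         constructor <;> ring)
        · intro x hx s hs
          have hd := Metric.mem_ball.1 hx
          rw [Real.dist_eq] at hd
          have h1 := abs_lt.1 hd
          have hle : B ≤ x + s := by cases abs_cases x0 <;> linarith [h1.1, h1.2]
          exact hboxf (x + s, c - x) hle
        · intro x hx s hs
          have hd := Metric.mem_ball.1 hx
          rw [Real.dist_eq] at hd
          have h1 := abs_lt.1 hd
          have hlt : B < x + s := by cases abs_cases x0 <;> linarith [h1.1, h1.2]
          show (fderiv ℝ H (x + s, c - x)) ((1:ℝ), (-1:ℝ)) = 0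
          rw [pd_zero_fst hboxf (z := (x + s, c - x)) hlt]; rfl
      have hval : (∫ s in Ioi (0:ℝ), fderiv ℝ H (x0 + s, c - x0) ((1:ℝ), (-1:ℝ))) = 0 := by
        have hsub : ∀ s : ℝ, fderiv ℝ H (x0 + s, c - x0) ((1:ℝ), (-1:ℝ)) =
            fderiv ℝ H (x0 + s, c - x0) ((1:ℝ), (0:ℝ)) -
            fderiv ℝ H (x0 + s, c - x0) ((0:ℝ), (1:ℝ)) := by
          intro s
          have hv : ((1:ℝ), (-1:ℝ)) = ((1:ℝ), (0:ℝ)) - ((0:ℝ), (1:ℝ)) := by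
            simp [Prod.ext_iff]
          rw [hv, map_sub]
        rw [show (fun s => fderiv ℝ H (x0 + s, c - x0) ((1:ℝ), (-1:ℝ))) =
            (fun s => fderiv ℝ H (x0 + s, c - x0) ((1:ℝ), (0:ℝ)) -
              fderiv ℝ H (x0 + s, c - x0) ((0:ℝ), (1:ℝ))) from funext hsub]
        have hint1 : IntegrableOn (fun s => fderiv ℝ H (x0 + s, c - x0) ((1:ℝ), (0:ℝ)))
            (Ioi (0:ℝ)) := by
          refine integrableOn_Ioi_of_vanish ((cont_pd hH one_le_two _).comp (by fun_prop))
            (C := B + |x0| + 1) (by positivity) ?_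
          intro s hs
          have hlt : B < x0 + s := by cases abs_cases x0 <;> linarith
          rw [pd_zero_fst hboxf (by simpa using hlt)]; rfl
        have hint2 : IntegrableOn (fun s => fderiv ℝ H (x0 + s, c - x0) ((0:ℝ), (1:ℝ)))
            (Ioi (0:ℝ)) := by
          refine integrableOn_Ioi_of_vanish ((cont_pd hH one_le_two _).comp (by fun_prop))
            (C := B + |x0| + 1) (by positivity) ?_
          intro s hs
          have hlt : B < x0 + s := by cases abs_cases x0 <;> linarith
          rw [pd_zero_fst hboxf (by simpa using hlt)]; rfl
        rw [integral_sub hint1 hint2, lemA1 hH1 hB hboxf, hdag]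
        ring
      rw [hval] at hstep
      exact hstep
    have hconst : ζ p = ζ (B + 1) :=
      is_const_of_deriv_eq_zero (fun x => (hζ x).differentiableAt) (fun x => (hζ x).deriv) _ _
    have hend : ζ (B + 1) = 0 := by
      rw [hζdef]
      simp only
      rw [setIntegral_congr_fun measurableSet_Ioi
        (fun s hs => hboxf ((B:ℝ) + 1 + s, c - (B + 1)) (by simp only; linarith [mem_Ioi.1 hs]))]
      simp
    have hcp : c - p = q := by rw [hc]; ring
    have : ζ p = ∫ s in Ioi (0:ℝ), H (p + s, q) := by rw [hζdef]; simp only [hcp]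
    rw [← this, hconst, hend]
  -- conclude H = 0
  intro z
  obtain ⟨p, q⟩ := z
  have h0 := deriv_zero_of_zero_fun (fun y => hPhi0 y q) (hder q p)
  rw [lemA1 hH1 hB hboxf p q] at h0
  linarith

lemma pder_fst_fst {F : ℝ × ℝ → ℝ} (hF1 : ContDiff ℝ 1 F) {B : ℝ} (hB : 0 < B)
    (hboxf : ∀ z : ℝ × ℝ, B ≤ z.1 → F z = 0) (φ : ℝ → ℝ) (hφ : Continuous φ) (q x0 : ℝ) :
    HasDerivAt (fun x => ∫ t in Ioi (0:ℝ), φ t * F (x + t, q))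
      (∫ t in Ioi (0:ℝ), φ t * fderiv ℝ F (x0 + t, q) ((1:ℝ), (0:ℝ))) x0 := by
  have hdiff : Differentiable ℝ F := hF1.differentiable one_ne_zero
  refine hasDerivAt_integral_param (fun x t => φ t * F (x + t, q))
    (fun x t => φ t * fderiv ℝ F (x + t, q) ((1:ℝ), (0:ℝ)))
    ((hφ.comp continuous_snd).mul (hF1.continuous.comp (by fun_prop)))
    ((hφ.comp continuous_snd).mul ((cont_pd hF1 le_rfl _).comp (by fun_prop)))
    ?_ (C := B + |x0| + 2) (by positivity) x0 ?_ ?_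
  · intro x t
    exact (hasDerivAt_pt F hdiff (fun y => (y + t, q)) (t, q) (1, 0) x
      (fun y => by simp only [Prod.mk_add_mk, Prod.smul_mk, smul_eq_mul, Prod.mk.injEq]
                   constructor <;> ring)).const_mul (φ t)
  · intro x hx t ht
    have hd := abs_lt.1 ((Real.dist_eq x x0) ▸ Metric.mem_ball.1 hx)
    have hle : B ≤ x + t := by cases abs_cases x0 <;> linarith [hd.1, hd.2]
    simp only [hboxf (x + t, q) hle, mul_zero]
  · intro x hx t ht
    have hd := abs_lt.1 ((Real.dist_eq x x0) ▸ Metric.mem_ball.1 hx)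
    have hlt : B < x + t := by cases abs_cases x0 <;> linarith [hd.1, hd.2]
    simp only [pd_zero_fst hboxf (z := (x + t, q)) hlt, ContinuousLinearMap.zero_apply, mul_zero]

lemma pder_snd_snd {F : ℝ × ℝ → ℝ} (hF1 : ContDiff ℝ 1 F) {B : ℝ} (hB : 0 < B)
    (hboxs : ∀ z : ℝ × ℝ, B ≤ z.2 → F z = 0) (φ : ℝ → ℝ) (hφ : Continuous φ) (p x0 : ℝ) :
    HasDerivAt (fun x => ∫ t in Ioi (0:ℝ), φ t * F (p, x + t))
      (∫ t in Ioi (0:ℝ), φ t * fderiv ℝ F (p, x0 + t) ((0:ℝ), (1:ℝ))) x0 := by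
  have hdiff : Differentiable ℝ F := hF1.differentiable one_ne_zero
  refine hasDerivAt_integral_param (fun x t => φ t * F (p, x + t))
    (fun x t => φ t * fderiv ℝ F (p, x + t) ((0:ℝ), (1:ℝ)))
    ((hφ.comp continuous_snd).mul (hF1.continuous.comp (by fun_prop)))
    ((hφ.comp continuous_snd).mul ((cont_pd hF1 le_rfl _).comp (by fun_prop)))
    ?_ (C := B + |x0| + 2) (by positivity) x0 ?_ ?_
  · intro x t
    exact (hasDerivAt_pt F hdiff (fun y => (p, y + t)) (p, t) (0, 1) x
      (fun y => by simp only [Prod.mk_add_mk, Prod.smul_mk, smul_eq_mul, Prod.mk.injEq]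
                   constructor <;> ring)).const_mul (φ t)
  · intro x hx t ht
    have hd := abs_lt.1 ((Real.dist_eq x x0) ▸ Metric.mem_ball.1 hx)
    have hle : B ≤ x + t := by cases abs_cases x0 <;> linarith [hd.1, hd.2]
    simp only [hboxs (p, x + t) hle, mul_zero]
  · intro x hx t ht
    have hd := abs_lt.1 ((Real.dist_eq x x0) ▸ Metric.mem_ball.1 hx)
    have hlt : B < x + t := by cases abs_cases x0 <;> linarith [hd.1, hd.2]
    simp only [pd_zero_snd hboxs (z := (p, x + t)) hlt, ContinuousLinearMap.zero_apply, mul_zero]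

lemma pder_fst_snd {F : ℝ × ℝ → ℝ} (hF1 : ContDiff ℝ 1 F) {B : ℝ} (hB : 0 < B)
    (hboxs : ∀ z : ℝ × ℝ, B ≤ z.2 → F z = 0) (φ : ℝ → ℝ) (hφ : Continuous φ) (q x0 : ℝ) :
    HasDerivAt (fun x => ∫ t in Ioi (0:ℝ), φ t * F (x, q + t))
      (∫ t in Ioi (0:ℝ), φ t * fderiv ℝ F (x0, q + t) ((1:ℝ), (0:ℝ))) x0 := by
  have hdiff : Differentiable ℝ F := hF1.differentiable one_ne_zero
  refine hasDerivAt_integral_param (fun x t => φ t * F (x, q + t))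
    (fun x t => φ t * fderiv ℝ F (x, q + t) ((1:ℝ), (0:ℝ)))
    ((hφ.comp continuous_snd).mul (hF1.continuous.comp (by fun_prop)))
    ((hφ.comp continuous_snd).mul ((cont_pd hF1 le_rfl _).comp (by fun_prop)))
    ?_ (C := B + |q| + 2) (by positivity) x0 ?_ ?_
  · intro x t
    exact (hasDerivAt_pt F hdiff (fun y => (y, q + t)) (0, q + t) (1, 0) x
      (fun y => by simp only [Prod.mk_add_mk, Prod.smul_mk, smul_eq_mul, Prod.mk.injEq]
                   constructor <;> ring)).const_mul (φ t)
  · intro x hx t ht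
    have hle : B ≤ q + t := by cases abs_cases q <;> linarith
    simp only [hboxs (x, q + t) hle, mul_zero]
  · intro x hx t ht
    have hlt : B < q + t := by cases abs_cases q <;> linarith
    simp only [pd_zero_snd hboxs (z := (x, q + t)) hlt, ContinuousLinearMap.zero_apply, mul_zero]

lemma pder_snd_fst {F : ℝ × ℝ → ℝ} (hF1 : ContDiff ℝ 1 F) {B : ℝ} (hB : 0 < B)
    (hboxf : ∀ z : ℝ × ℝ, B ≤ z.1 → F z = 0) (φ : ℝ → ℝ) (hφ : Continuous φ) (p x0 : ℝ) :
    HasDerivAt (fun x => ∫ t in Ioi (0:ℝ), φ t * F (p + t, x))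
      (∫ t in Ioi (0:ℝ), φ t * fderiv ℝ F (p + t, x0) ((0:ℝ), (1:ℝ))) x0 := by
  have hdiff : Differentiable ℝ F := hF1.differentiable one_ne_zero
  refine hasDerivAt_integral_param (fun x t => φ t * F (p + t, x))
    (fun x t => φ t * fderiv ℝ F (p + t, x) ((0:ℝ), (1:ℝ)))
    ((hφ.comp continuous_snd).mul (hF1.continuous.comp (by fun_prop)))
    ((hφ.comp continuous_snd).mul ((cont_pd hF1 le_rfl _).comp (by fun_prop)))
    ?_ (C := B + |p| + 2) (by positivity) x0 ?_ ?_
  · intro x t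
    exact (hasDerivAt_pt F hdiff (fun y => (p + t, y)) (p + t, 0) (0, 1) x
      (fun y => by simp only [Prod.mk_add_mk, Prod.smul_mk, smul_eq_mul, Prod.mk.injEq]
                   constructor <;> ring)).const_mul (φ t)
  · intro x hx t ht
    have hle : B ≤ p + t := by cases abs_cases p <;> linarith
    simp only [hboxf (p + t, x) hle, mul_zero]
  · intro x hx t ht
    have hlt : B < p + t := by cases abs_cases p <;> linarith
    simp only [pd_zero_fst hboxf (z := (p + t, x)) hlt, ContinuousLinearMap.zero_apply, mul_zero]

lemma byparts_fst {F : ℝ × ℝ → ℝ} (hF1 : ContDiff ℝ 1 F) {B : ℝ} (hB : 0 < B)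
    (hboxf : ∀ z : ℝ × ℝ, B ≤ z.1 → F z = 0) (p q : ℝ) :
    ∫ t in Ioi (0:ℝ), t * fderiv ℝ F (p + t, q) ((1:ℝ), (0:ℝ))
      = - ∫ t in Ioi (0:ℝ), F (p + t, q) := by
  refine integral_Ioi_mul_deriv (g := fun t => F (p + t, q))
    (g' := fun t => fderiv ℝ F (p + t, q) ((1:ℝ), (0:ℝ))) ?_
    (hF1.continuous.comp (by fun_prop)) ((cont_pd hF1 le_rfl _).comp (by fun_prop))
    (C := B + |p| + 2) (by positivity) ?_ ?_
  · intro t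
    exact hasDerivAt_pt F (hF1.differentiable one_ne_zero) (fun y => (p + y, q)) (p, q) (1, 0) t
      (fun y => by simp only [Prod.mk_add_mk, Prod.smul_mk, smul_eq_mul, Prod.mk.injEq]
                   constructor <;> ring)
  · intro s hs
    exact hboxf (p + s, q) (by show B ≤ p + s; cases abs_cases p <;> linarith)
  · intro s hs
    have hlt : B < p + s := by cases abs_cases p <;> linarith
    simp only [pd_zero_fst hboxf (z := (p + s, q)) hlt, ContinuousLinearMap.zero_apply]

lemma byparts_snd {F : ℝ × ℝ → ℝ} (hF1 : ContDiff ℝ 1 F) {B : ℝ} (hB : 0 < B)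
    (hboxs : ∀ z : ℝ × ℝ, B ≤ z.2 → F z = 0) (p q : ℝ) :
    ∫ t in Ioi (0:ℝ), t * fderiv ℝ F (p, q + t) ((0:ℝ), (1:ℝ))
      = - ∫ t in Ioi (0:ℝ), F (p, q + t) := by
  refine integral_Ioi_mul_deriv (g := fun t => F (p, q + t))
    (g' := fun t => fderiv ℝ F (p, q + t) ((0:ℝ), (1:ℝ))) ?_
    (hF1.continuous.comp (by fun_prop)) ((cont_pd hF1 le_rfl _).comp (by fun_prop))
    (C := B + |q| + 2) (by positivity) ?_ ?_
  · intro t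
    exact hasDerivAt_pt F (hF1.differentiable one_ne_zero) (fun y => (p, q + y)) (p, q) (0, 1) t
      (fun y => by simp only [Prod.mk_add_mk, Prod.smul_mk, smul_eq_mul, Prod.mk.injEq]
                   constructor <;> ring)
  · intro s hs
    exact hboxs (p, q + s) (by show B ≤ q + s; cases abs_cases q <;> linarith)
  · intro s hs
    have hlt : B < q + s := by cases abs_cases q <;> linarith
    simp only [pd_zero_snd hboxs (z := (p, q + s)) hlt, ContinuousLinearMap.zero_apply]

lemma stage1 {F G : ℝ × ℝ → ℝ} (hF : ContDiff ℝ 2 F) (hG : ContDiff ℝ 2 G) {B : ℝ} (hB : 0 < B)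
    (hboxF : ∀ z : ℝ × ℝ, B ≤ z.1 ∨ B ≤ z.2 → F z = 0)
    (hboxG : ∀ z : ℝ × ℝ, B ≤ z.1 ∨ B ≤ z.2 → G z = 0)
    (hC0 : ∀ p q : ℝ, (∫ t in Ioi (0:ℝ), F (p + t, q)) + (∫ t in Ioi (0:ℝ), G (p, q + t)) = 0)
    (hC1 : ∀ p q : ℝ, (∫ t in Ioi (0:ℝ), t * F (p + t, q))
      + (∫ t in Ioi (0:ℝ), t * G (p, q + t)) = 0) :
    (∀ z : ℝ × ℝ, F z = 0) ∧ (∀ z : ℝ × ℝ, G z = 0) := by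
  have hF1 : ContDiff ℝ 1 F := hF.of_le one_le_two
  have hG1 : ContDiff ℝ 1 G := hG.of_le one_le_two
  have hFf : ∀ z : ℝ × ℝ, B ≤ z.1 → F z = 0 := fun z h => hboxF z (Or.inl h)
  have hFs : ∀ z : ℝ × ℝ, B ≤ z.2 → F z = 0 := fun z h => hboxF z (Or.inr h)
  have hGf : ∀ z : ℝ × ℝ, B ≤ z.1 → G z = 0 := fun z h => hboxG z (Or.inl h)
  have hGs : ∀ z : ℝ × ℝ, B ≤ z.2 → G z = 0 := fun z h => hboxG z (Or.inr h)
  -- D3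
  have D3 : ∀ p q : ℝ,
      (∫ t in Ioi (0:ℝ), fderiv ℝ G (p, q + t) ((1:ℝ), (0:ℝ))) = F (p, q) := by
    intro p q
    have h1 := pder_fst_fst hF1 hB hFf (fun _ => 1) continuous_const q p
    have h2 := pder_fst_snd hG1 hB hGs (fun _ => 1) continuous_const q p
    have hzero : ∀ y : ℝ, ((∫ t in Ioi (0:ℝ), (1:ℝ) * F (y + t, q))
        + (∫ t in Ioi (0:ℝ), (1:ℝ) * G (y, q + t))) = 0 := by
      intro y; simpa using hC0 y q
    have hthis := deriv_zero_of_zero_fun hzero (h1.add h2)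
    simp only [one_mul] at hthis
    rw [lemA1 hF1 hB hFf p q] at hthis
    linarith
  -- D1
  have D1 : ∀ p q : ℝ, -(∫ t in Ioi (0:ℝ), F (p + t, q))
      + (∫ t in Ioi (0:ℝ), t * fderiv ℝ G (p, q + t) ((1:ℝ), (0:ℝ))) = 0 := by
    intro p q
    have h1 := pder_fst_fst hF1 hB hFf (fun t => t) continuous_id q p
    have h2 := pder_fst_snd hG1 hB hGs (fun t => t) continuous_id q p
    have hzero : ∀ y : ℝ, ((∫ t in Ioi (0:ℝ), t * F (y + t, q))
        + (∫ t in Ioi (0:ℝ), t * G (y, q + t))) = 0 := by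
      intro y; simpa using hC1 y q
    have hthis := deriv_zero_of_zero_fun hzero (h1.add h2)
    rw [byparts_fst hF1 hB hFf p q] at hthis
    linarith
  -- D2 via differentiating D1 in q
  have hd1G1 : ContDiff ℝ 1 (fun z => fderiv ℝ G z ((1:ℝ), (0:ℝ))) := contDiff_pd hG _
  have hd1Gs : ∀ z : ℝ × ℝ, B + 1 ≤ z.2 → (fun z => fderiv ℝ G z ((1:ℝ), (0:ℝ))) z = 0 := by
    intro z h
    simp only [pd_zero_snd hGs (lt_of_lt_of_le (show B < B + 1 by linarith) h),
      ContinuousLinearMap.zero_apply]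
  have hdag : ∀ p q : ℝ,
      (∫ t in Ioi (0:ℝ), fderiv ℝ F (p + t, q) ((0:ℝ), (1:ℝ))) = - F (p, q) := by
    intro p q
    have h1 := (pder_snd_fst hF1 hB hFf (fun _ => 1) continuous_const p q).neg
    have h2 := pder_snd_snd (F := fun z => fderiv ℝ G z ((1:ℝ), (0:ℝ))) hd1G1
      (B := B + 1) (by linarith) hd1Gs (fun t => t) continuous_id p q
    have hzero : ∀ y : ℝ, (-(∫ t in Ioi (0:ℝ), (1:ℝ) * F (p + t, y))
        + (∫ t in Ioi (0:ℝ), t * (fun z => fderiv ℝ G z ((1:ℝ), (0:ℝ))) (p, y + t))) = 0 := by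
      intro y; simpa using D1 p y
    have hthis := deriv_zero_of_zero_fun hzero (h1.add h2)
    rw [byparts_snd (F := fun z => fderiv ℝ G z ((1:ℝ), (0:ℝ))) hd1G1
      (B := B + 1) (by linarith) hd1Gs p q] at hthis
    simp only [one_mul] at hthis
    have := D3 p q
    linarith
  have Fzero : ∀ z : ℝ × ℝ, F z = 0 := key hF hB hboxF hdag
  -- now G
  have Gzero : ∀ z : ℝ × ℝ, G z = 0 := by
    have hGint : ∀ p q : ℝ, (∫ t in Ioi (0:ℝ), G (p, q + t)) = 0 := by
      intro p q
      have h := hC0 p q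
      have hFint : (∫ t in Ioi (0:ℝ), F (p + t, q)) = 0 := by
        simp only [Fzero]
        simp
      linarith
    intro z
    obtain ⟨p, q⟩ := z
    have h2 := pder_snd_snd hG1 hB hGs (fun _ => 1) continuous_const p q
    have hzero : ∀ y : ℝ, (∫ t in Ioi (0:ℝ), (1:ℝ) * G (p, y + t)) = 0 := by
      intro y; simpa using hGint p y
    have hthis := deriv_zero_of_zero_fun hzero h2
    simp only [one_mul] at hthis
    rw [lemA2 hG1 hB hGs p q] at hthis
    linarith
  exact ⟨Fzero, Gzero⟩

lemma stage2 {H : ℝ × ℝ → ℝ} (hH : ContDiff ℝ 2 H) {B : ℝ} (hB : 0 < B)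
    (hbox : ∀ z : ℝ × ℝ, B ≤ z.1 ∨ B ≤ z.2 → H z = 0)
    (hMeq : ∀ p q : ℝ, (∫ t in Ioi (0:ℝ), H (p + t, q)) = ∫ t in Ioi (0:ℝ), H (p, q + t)) :
    ∀ z : ℝ × ℝ, H z = 0 := by
  have hH1 : ContDiff ℝ 1 H := hH.of_le one_le_two
  have hHf : ∀ z : ℝ × ℝ, B ≤ z.1 → H z = 0 := fun z h => hbox z (Or.inl h)
  have hHs : ∀ z : ℝ × ℝ, B ≤ z.2 → H z = 0 := fun z h => hbox z (Or.inr h)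
  refine key hH hB hbox ?_
  intro p q
  have h1 := pder_snd_fst hH1 hB hHf (fun _ => 1) continuous_const p q
  have h2 := (pder_snd_snd hH1 hB hHs (fun _ => 1) continuous_const p q).neg
  have hzero : ∀ y : ℝ, ((∫ t in Ioi (0:ℝ), (1:ℝ) * H (p + t, y))
      + -(∫ t in Ioi (0:ℝ), (1:ℝ) * H (p, y + t))) = 0 := by
    intro y
    have := hMeq p y
    simp only [one_mul]
    linarith
  have hthis := deriv_zero_of_zero_fun hzero (h1.add h2)
  simp only [one_mul] at hthis
  rw [lemA2 hH1 hB hHs p q] at hthis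
  linarith

end VP

/-- a symmetric 2-tensor field is uniquely determined by `Lf`, `L¹f`,
and `Mf`. -/
theorem injectivity_L_L1_M
    (u1 u2 : ℝ) (hu : u1 ^ 2 + u2 ^ 2 = 1) (hu1 : 0 < u1) (hu2 : 0 < u2)
    (f11 f12 f22 : ℝ × ℝ → ℝ)
    (h11 : ContDiff ℝ 2 f11) (h12 : ContDiff ℝ 2 f12) (h22 : ContDiff ℝ 2 f22)
    (s11 : SuppInDisc f11) (s12 : SuppInDisc f12) (s22 : SuppInDisc f22)
    (hL0 : ∀ x : ℝ × ℝ, VlineLk 0 u1 u2 f11 f12 f22 x = 0)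
    (hL1 : ∀ x : ℝ × ℝ, VlineLk 1 u1 u2 f11 f12 f22 x = 0)
    (hM : ∀ x : ℝ × ℝ, VlineM u1 u2 f11 f12 f22 x = 0) :
    ∀ x : ℝ × ℝ, f11 x = 0 ∧ f12 x = 0 ∧ f22 x = 0 := by
  have hu1' : u1 ≠ 0 := ne_of_gt hu1
  have hu2' : u2 ≠ 0 := ne_of_gt hu2
  set B : ℝ := 1 / (u1 * u2) + 1 with hBdef
  have hB : 0 < B := by rw [hBdef]; positivity
  -- geometry of the coordinate map
  have he1 : ∀ p q t : ℝ,
      VP.emap u1 u2 (p, q) + t • ((u1, u2) : ℝ × ℝ) = VP.emap u1 u2 (p + t, q) := by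
    intro p q t
    simp only [VP.emap, Prod.mk_add_mk, Prod.smul_mk, smul_eq_mul, Prod.mk.injEq]
    constructor <;> ring
  have he2 : ∀ p q t : ℝ,
      VP.emap u1 u2 (p, q) + t • ((-u1, u2) : ℝ × ℝ) = VP.emap u1 u2 (p, q + t) := by
    intro p q t
    simp only [VP.emap, Prod.mk_add_mk, Prod.smul_mk, smul_eq_mul, Prod.mk.injEq]
    constructor <;> ring
  have hsurj : ∀ y : ℝ × ℝ,
      VP.emap u1 u2 ((y.1 / u1 + y.2 / u2) / 2, (y.2 / u2 - y.1 / u1) / 2) = y := by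
    intro y
    simp only [VP.emap, Prod.ext_iff]
    constructor <;> (field_simp; ring)
  have heC : ContDiff ℝ 2 (VP.emap u1 u2) :=
    ContDiff.prodMk (contDiff_const.mul (contDiff_fst.sub contDiff_snd))
      (contDiff_const.mul (contDiff_fst.add contDiff_snd))
  -- disc geometry bound
  have hdisc : ∀ p q : ℝ, B ≤ p → 1 ≤ (u1 * (p - q)) ^ 2 + (u2 * (p + q)) ^ 2 := by
    intro p q hp
    rw [hBdef] at hp
    have hpos : 0 < u1 * u2 := mul_pos hu1 hu2
    have h1 : 1 / (u1 * u2) ≤ p := by linarith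
    have habp : 1 ≤ u1 * u2 * p := by
      rw [div_le_iff₀ hpos] at h1
      linarith
    have hu12 : u1 ^ 2 ≤ 1 := by nlinarith
    have hu22 : u2 ^ 2 ≤ 1 := by nlinarith
    nlinarith [sq_nonneg (p - q), sq_nonneg (p + q), sq_nonneg q,
      mul_nonneg (mul_nonneg (sq_nonneg u1) (sub_nonneg.2 hu22)) (sq_nonneg (p - q)),
      mul_nonneg (mul_nonneg (sq_nonneg u2) (sub_nonneg.2 hu12)) (sq_nonneg (p + q)),
      mul_nonneg (mul_nonneg (sq_nonneg u1) (sq_nonneg u2)) (sq_nonneg q),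
      sq_nonneg (u1 * u2 * p - 1)]
  have hub : ∀ z : ℝ × ℝ, B ≤ z.1 ∨ B ≤ z.2 →
      1 ≤ (VP.emap u1 u2 z).1 ^ 2 + (VP.emap u1 u2 z).2 ^ 2 := by
    intro z hz
    rcases hz with h | h
    · have := hdisc z.1 z.2 h
      simpa [VP.emap] using this
    · have h0 := hdisc z.2 z.1 h
      have heq : (u1 * (z.2 - z.1)) ^ 2 + (u2 * (z.2 + z.1)) ^ 2
          = (u1 * (z.1 - z.2)) ^ 2 + (u2 * (z.1 + z.2)) ^ 2 := by ring
      rw [heq] at h0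
      simpa [VP.emap] using h0
  -- box conditions
  have hboxF : ∀ z : ℝ × ℝ, B ≤ z.1 ∨ B ≤ z.2 →
      (u1 ^ 2 * f11 (VP.emap u1 u2 z) + 2 * u1 * u2 * f12 (VP.emap u1 u2 z)
        + u2 ^ 2 * f22 (VP.emap u1 u2 z)) = 0 := by
    intro z hz
    have h := hub z hz
    rw [s11 _ h, s12 _ h, s22 _ h]; ring
  have hboxG : ∀ z : ℝ × ℝ, B ≤ z.1 ∨ B ≤ z.2 →
      (u1 ^ 2 * f11 (VP.emap u1 u2 z) - 2 * u1 * u2 * f12 (VP.emap u1 u2 z)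
        + u2 ^ 2 * f22 (VP.emap u1 u2 z)) = 0 := by
    intro z hz
    have h := hub z hz
    rw [s11 _ h, s12 _ h, s22 _ h]; ring
  -- smoothness of the composed fields
  have hFC : ContDiff ℝ 2 (fun z : ℝ × ℝ => u1 ^ 2 * f11 (VP.emap u1 u2 z)
      + 2 * u1 * u2 * f12 (VP.emap u1 u2 z) + u2 ^ 2 * f22 (VP.emap u1 u2 z)) :=
    ((contDiff_const.mul (h11.comp heC)).add (contDiff_const.mul (h12.comp heC))).add
      (contDiff_const.mul (h22.comp heC))
  have hGC : ContDiff ℝ 2 (fun z : ℝ × ℝ => u1 ^ 2 * f11 (VP.emap u1 u2 z)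
      - 2 * u1 * u2 * f12 (VP.emap u1 u2 z) + u2 ^ 2 * f22 (VP.emap u1 u2 z)) :=
    ((contDiff_const.mul (h11.comp heC)).sub (contDiff_const.mul (h12.comp heC))).add
      (contDiff_const.mul (h22.comp heC))
  -- the transform conditions in (p,q)-coordinates
  have hC0 : ∀ p q : ℝ,
      (∫ t in Set.Ioi (0:ℝ), (u1 ^ 2 * f11 (VP.emap u1 u2 (p + t, q))
        + 2 * u1 * u2 * f12 (VP.emap u1 u2 (p + t, q))
        + u2 ^ 2 * f22 (VP.emap u1 u2 (p + t, q))))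
      + (∫ t in Set.Ioi (0:ℝ), (u1 ^ 2 * f11 (VP.emap u1 u2 (p, q + t))
        - 2 * u1 * u2 * f12 (VP.emap u1 u2 (p, q + t))
        + u2 ^ 2 * f22 (VP.emap u1 u2 (p, q + t)))) = 0 := by
    intro p q
    have h := hL0 (VP.emap u1 u2 (p, q))
    simp only [VlineLk, Xmom, Pi.add_apply, pow_zero, one_mul, he1, he2] at h
    exact h
  have hC1 : ∀ p q : ℝ,
      (∫ t in Set.Ioi (0:ℝ), t * (u1 ^ 2 * f11 (VP.emap u1 u2 (p + t, q))
        + 2 * u1 * u2 * f12 (VP.emap u1 u2 (p + t, q))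
        + u2 ^ 2 * f22 (VP.emap u1 u2 (p + t, q))))
      + (∫ t in Set.Ioi (0:ℝ), t * (u1 ^ 2 * f11 (VP.emap u1 u2 (p, q + t))
        - 2 * u1 * u2 * f12 (VP.emap u1 u2 (p, q + t))
        + u2 ^ 2 * f22 (VP.emap u1 u2 (p, q + t)))) = 0 := by
    intro p q
    have h := hL1 (VP.emap u1 u2 (p, q))
    simp only [VlineLk, Xmom, Pi.add_apply, pow_one, he1, he2] at h
    exact h
  have hst1 := VP.stage1 hFC hGC hB hboxF hboxG hC0 hC1
  -- pointwise consequences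
  have hgu : ∀ y : ℝ × ℝ, u1 ^ 2 * f11 y + 2 * u1 * u2 * f12 y + u2 ^ 2 * f22 y = 0 := by
    intro y
    have h : u1 ^ 2 * f11 (VP.emap u1 u2 ((y.1 / u1 + y.2 / u2) / 2, (y.2 / u2 - y.1 / u1) / 2))
        + 2 * u1 * u2 * f12 (VP.emap u1 u2 ((y.1 / u1 + y.2 / u2) / 2, (y.2 / u2 - y.1 / u1) / 2))
        + u2 ^ 2 * f22 (VP.emap u1 u2 ((y.1 / u1 + y.2 / u2) / 2, (y.2 / u2 - y.1 / u1) / 2))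
        = 0 := hst1.1 _
    rw [hsurj y] at h
    exact h
  have hgv : ∀ y : ℝ × ℝ, u1 ^ 2 * f11 y - 2 * u1 * u2 * f12 y + u2 ^ 2 * f22 y = 0 := by
    intro y
    have h : u1 ^ 2 * f11 (VP.emap u1 u2 ((y.1 / u1 + y.2 / u2) / 2, (y.2 / u2 - y.1 / u1) / 2))
        - 2 * u1 * u2 * f12 (VP.emap u1 u2 ((y.1 / u1 + y.2 / u2) / 2, (y.2 / u2 - y.1 / u1) / 2))
        + u2 ^ 2 * f22 (VP.emap u1 u2 ((y.1 / u1 + y.2 / u2) / 2, (y.2 / u2 - y.1 / u1) / 2))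
        = 0 := hst1.2 _
    rw [hsurj y] at h
    exact h
  have hf12 : ∀ y : ℝ × ℝ, f12 y = 0 := by
    intro y
    have h4 : (4 * (u1 * u2)) * f12 y = 0 := by
      have a := hgu y; have b := hgv y; linarith
    rcases mul_eq_zero.1 h4 with h | h
    · exact absurd h (by positivity)
    · exact h
  have hsum : ∀ y : ℝ × ℝ, u1 ^ 2 * f11 y + u2 ^ 2 * f22 y = 0 := by
    intro y
    have a := hgu y
    rw [hf12 y] at a
    linarith
  -- mixed transform reduces to f11
  have hmU : ∀ y : ℝ × ℝ, -(u1 * u2) * f11 y + (u1 ^ 2 - u2 ^ 2) * f12 y + u1 * u2 * f22 y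
      = -(u1 / u2) * f11 y := by
    intro y
    have h' : u2 * (-(u1 * u2) * f11 y + (u1 ^ 2 - u2 ^ 2) * f12 y + u1 * u2 * f22 y)
        = -u1 * f11 y := by
      linear_combination u1 * hsum y + (u1 ^ 2 - u2 ^ 2) * u2 * hf12 y - u1 * f11 y * hu
    field_simp
    linear_combination h'
  have hmV : ∀ y : ℝ × ℝ, u1 * u2 * f11 y + (u1 ^ 2 - u2 ^ 2) * f12 y - u1 * u2 * f22 y
      = (u1 / u2) * f11 y := by
    intro y
    have h' : u2 * (u1 * u2 * f11 y + (u1 ^ 2 - u2 ^ 2) * f12 y - u1 * u2 * f22 y)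
        = u1 * f11 y := by
      linear_combination (-u1) * hsum y + (u1 ^ 2 - u2 ^ 2) * u2 * hf12 y + u1 * f11 y * hu
    field_simp
    linear_combination h'
  have hMeq : ∀ p q : ℝ, (∫ t in Set.Ioi (0:ℝ), f11 (VP.emap u1 u2 (p + t, q)))
      = ∫ t in Set.Ioi (0:ℝ), f11 (VP.emap u1 u2 (p, q + t)) := by
    intro p q
    have h := hM (VP.emap u1 u2 (p, q))
    simp only [VlineM, Xbeam, Pi.add_apply, he1, he2] at h
    simp only [hmU, hmV] at h
    rw [integral_const_mul, integral_const_mul] at h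
    have hr : (u1 / u2) ≠ 0 := div_ne_zero hu1' hu2'
    have h3 : (u1 / u2) * ((∫ t in Set.Ioi (0:ℝ), f11 (VP.emap u1 u2 (p, q + t)))
        - ∫ t in Set.Ioi (0:ℝ), f11 (VP.emap u1 u2 (p + t, q))) = 0 := by
      linear_combination h
    have h4 := (mul_eq_zero.1 h3).resolve_left hr
    linarith
  have hHbox : ∀ z : ℝ × ℝ, B ≤ z.1 ∨ B ≤ z.2 → f11 (VP.emap u1 u2 z) = 0 :=
    fun z hz => s11 _ (hub z hz)
  have hHC : ContDiff ℝ 2 (fun z : ℝ × ℝ => f11 (VP.emap u1 u2 z)) := h11.comp heC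
  have Hz := VP.stage2 hHC hB hHbox hMeq
  have hf11 : ∀ y : ℝ × ℝ, f11 y = 0 := by
    intro y
    have h : f11 (VP.emap u1 u2 ((y.1 / u1 + y.2 / u2) / 2, (y.2 / u2 - y.1 / u1) / 2)) = 0 :=
      Hz _
    rw [hsurj y] at h
    exact h
  have hf22 : ∀ y : ℝ × ℝ, f22 y = 0 := by
    intro y
    have h := hsum y
    rw [hf11 y] at h
    have h2 : u2 ^ 2 * f22 y = 0 := by linarith
    rcases mul_eq_zero.1 h2 with h3 | h3
    · exact absurd h3 (by positivity)
    · exact h3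
  intro x
  exact ⟨hf11 x, hf12 x, hf22 x⟩
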